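/- For the polynomial W(x,y) = x^{4m+4}y^{4m+4}(x⁴−y⁴)^{4m−1}(x⁴+y⁴)(x⁸−34x⁴y⁴+y⁸) with m ≥ 1, the coefficient of x^{12m+8}y^{12m+8} is zero, and every other coefficient of x^i y^{24m+16−i} with i ≡ 0 (mod 4), 4m+4 ≤ i ≤ 20m+12, and i ≠ 12m+8 is nonzero. -/
import Mathlib

open MvPolynomial

noncomputable abbrev Wpoly (m : ℕ) : MvPolynomial (Fin 2) ℚ :=
  (X 0)^(4 * m + 4) * (X 1)^(4 * m + 4) * ((X 0)^4 - (X 1)^4)^(4 * m - 1)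
    * ((X 0)^4 + (X 1)^4) * ((X 0)^8 - 34 * (X 0)^4 * (X 1)^4 + (X 1)^8)

noncomputable def cW (m k : ℕ) : ℚ := (-1)^(k+1) * ((4*m-1).choose k)

lemma W_expand (m : ℕ) (hm : 1 ≤ m) :
    Wpoly m = ∑ k ∈ Finset.range (4*m),
      (cW m k) •
      ( X 0 ^ (4*m+16+4*k) * X 1 ^ (4*m+4+4*(4*m-1-k))
        - (33:ℚ) • (X 0 ^ (4*m+12+4*k) * X 1 ^ (4*m+8+4*(4*m-1-k)))
        - (33:ℚ) • (X 0 ^ (4*m+8+4*k) * X 1 ^ (4*m+12+4*(4*m-1-k)))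
        + X 0 ^ (4*m+4+4*k) * X 1 ^ (4*m+16+4*(4*m-1-k)) ) := by
  have h4 : 4*m-1+1 = 4*m := by omega
  rw [show Wpoly m = ((X 0)^4 - (X 1)^4)^(4 * m - 1) *
      ((X 0)^(4*m+4) * (X 1)^(4*m+4) * ((X 0)^4 + (X 1)^4)
        * ((X 0)^8 - 34 * (X 0)^4 * (X 1)^4 + (X 1)^8)) from by ring,
    sub_pow, h4, Finset.sum_mul]
  refine Finset.sum_congr rfl fun k hk => ?_
  simp only [Finset.mem_range] at hk
  have hpar : ((-1 : MvPolynomial (Fin 2) ℚ))^(k + (4*m-1)) = (-1)^(k+1) := by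
    rcases Nat.even_or_odd k with he | ho
    · have h1 : Odd (k + (4*m-1)) := by
        rcases he with ⟨t, ht⟩; exact ⟨t + 2*m - 1, by omega⟩
      have h2 : Odd (k+1) := by rcases he with ⟨t, ht⟩; exact ⟨t, by omega⟩
      rw [h1.neg_one_pow, h2.neg_one_pow]
    · have h1 : Even (k + (4*m-1)) := by
        rcases ho with ⟨t, ht⟩; exact ⟨t + 2*m, by omega⟩
      have h2 : Even (k+1) := by rcases ho with ⟨t, ht⟩; exact ⟨t+1, by omega⟩
      rw [h1.neg_one_pow, h2.neg_one_pow]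
  rw [cW, smul_eq_C_mul, smul_eq_C_mul, smul_eq_C_mul, map_mul, map_pow, map_neg, map_one,
    map_natCast, hpar]
  have hd : ∀ a : ℕ, (X (1:Fin 2) : MvPolynomial (Fin 2) ℚ)^(a + 4*(4*m-1-k))
      = X 1 ^ a * ((X 1)^4)^(4*m-1-k) := by
    intro a; rw [pow_add, pow_mul]
  rw [hd, hd, hd, hd, show (C (33:ℚ) : MvPolynomial (Fin 2) ℚ) = 33 from map_ofNat C 33]
  generalize (4*m-1-k) = d
  ring

lemma coeff_XX (a b i j : ℕ) :
    coeff (Finsupp.single (0:Fin 2) i + Finsupp.single 1 j)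
      ((X 0 : MvPolynomial (Fin 2) ℚ)^a * X 1^b) = if a = i ∧ b = j then 1 else 0 := by
  rw [X_pow_eq_monomial, X_pow_eq_monomial, monomial_mul, coeff_monomial, one_mul]
  congr 1
  simp only [eq_iff_iff]
  constructor
  · intro h
    have h0 := DFunLike.congr_fun h 0
    have h1 := DFunLike.congr_fun h 1
    simp [Finsupp.single_apply, Finsupp.add_apply] at h0 h1
    exact ⟨h0, h1⟩
  · rintro ⟨rfl, rfl⟩; rfl

lemma sum_if (N t j : ℕ) (c : ℕ → ℚ) :
    ∑ k ∈ Finset.range N, (if j = k + t then c k else 0)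
      = if t ≤ j ∧ j - t < N then c (j - t) else 0 := by
  split
  · next h =>
    rw [Finset.sum_eq_single (j - t)]
    · rw [if_pos (by omega)]
    · intro k hk hne; rw [if_neg]; simp only [Finset.mem_range] at hk; omega
    · intro hk; simp only [Finset.mem_range] at hk; omega
  · next h =>
    apply Finset.sum_eq_zero
    intro k hk
    simp only [Finset.mem_range] at hk
    rw [if_neg]; omega

lemma coeff_W (m : ℕ) (hm : 1 ≤ m) (j : ℕ) (hj : j ≤ 4*m+2) :
    coeff (Finsupp.single (0:Fin 2) (4*m+4+4*j)
        + Finsupp.single (1:Fin 2) (24*m+16-(4*m+4+4*j))) (Wpoly m)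
      = (if 3 ≤ j ∧ j - 3 < 4*m then cW m (j-3) else 0)
        - 33 * (if 2 ≤ j ∧ j - 2 < 4*m then cW m (j-2) else 0)
        - 33 * (if 1 ≤ j ∧ j - 1 < 4*m then cW m (j-1) else 0)
        + (if 0 ≤ j ∧ j - 0 < 4*m then cW m (j-0) else 0) := by
  rw [W_expand m hm, coeff_sum]
  have hfun : ∀ k ∈ Finset.range (4*m),
      coeff (Finsupp.single (0:Fin 2) (4*m+4+4*j)
        + Finsupp.single (1:Fin 2) (24*m+16-(4*m+4+4*j)))
      ((cW m k) •
      ( X 0 ^ (4*m+16+4*k) * X 1 ^ (4*m+4+4*(4*m-1-k))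
        - (33:ℚ) • (X 0 ^ (4*m+12+4*k) * X 1 ^ (4*m+8+4*(4*m-1-k)))
        - (33:ℚ) • (X 0 ^ (4*m+8+4*k) * X 1 ^ (4*m+12+4*(4*m-1-k)))
        + X 0 ^ (4*m+4+4*k) * X 1 ^ (4*m+16+4*(4*m-1-k)) ))
      = (if j = k + 3 then cW m k else 0) - 33 * (if j = k + 2 then cW m k else 0)
        - 33 * (if j = k + 1 then cW m k else 0) + (if j = k + 0 then cW m k else 0) := by
    intro k hk
    simp only [Finset.mem_range] at hk
    rw [coeff_smul, coeff_add, coeff_sub, coeff_sub, coeff_smul, coeff_smul,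
      coeff_XX, coeff_XX, coeff_XX, coeff_XX, smul_eq_mul, smul_eq_mul, smul_eq_mul]
    rw [if_congr (show (4*m+16+4*k = 4*m+4+4*j ∧ 4*m+4+4*(4*m-1-k) = 24*m+16-(4*m+4+4*j))
          ↔ j = k + 3 by constructor <;> omega) rfl rfl,
        if_congr (show (4*m+12+4*k = 4*m+4+4*j ∧ 4*m+8+4*(4*m-1-k) = 24*m+16-(4*m+4+4*j))
          ↔ j = k + 2 by constructor <;> omega) rfl rfl,
        if_congr (show (4*m+8+4*k = 4*m+4+4*j ∧ 4*m+12+4*(4*m-1-k) = 24*m+16-(4*m+4+4*j))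
          ↔ j = k + 1 by constructor <;> omega) rfl rfl,
        if_congr (show (4*m+4+4*k = 4*m+4+4*j ∧ 4*m+16+4*(4*m-1-k) = 24*m+16-(4*m+4+4*j))
          ↔ j = k + 0 by constructor <;> omega) rfl rfl]
    split_ifs <;> ring
  rw [Finset.sum_congr rfl hfun]
  simp only [Finset.sum_add_distrib, Finset.sum_sub_distrib, ← Finset.mul_sum]
  rw [sum_if, sum_if, sum_if, sum_if]

lemma choose_le_succ' {n k : ℕ} (h : 2*k+1 ≤ n) : n.choose k ≤ n.choose (k+1) := by
  have h1 := Nat.choose_succ_right_eq n k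
  have h3 : n.choose k * (k+1) ≤ n.choose (k+1) * (k+1) := by
    rw [h1]; exact Nat.mul_le_mul_left _ (by omega)
  exact Nat.le_of_mul_le_mul_right h3 (Nat.succ_pos k)

lemma choose_lt_succ' {n k : ℕ} (h : 2*k+2 ≤ n) : n.choose k < n.choose (k+1) := by
  have h1 := Nat.choose_succ_right_eq n k
  have hpos : 0 < n.choose k := Nat.choose_pos (by omega)
  have h3 : n.choose k * (k+1) < n.choose (k+1) * (k+1) := by
    rw [h1]
    calc n.choose k * (k+1) < n.choose k * (n-k) :=
          Nat.mul_lt_mul_of_pos_left (by omega) hpos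
      _ = n.choose k * (n-k) := rfl
  exact Nat.lt_of_mul_lt_mul_right h3

lemma choose_succ_le' {n k : ℕ} (h : n ≤ 2*k+1) : n.choose (k+1) ≤ n.choose k := by
  have h1 := Nat.choose_succ_right_eq n k
  have h3 : n.choose (k+1) * (k+1) ≤ n.choose k * (k+1) := by
    rw [h1]; exact Nat.mul_le_mul_left _ (by omega)
  exact Nat.le_of_mul_le_mul_right h3 (Nat.succ_pos k)

lemma choose_succ_lt' {n k : ℕ} (h : n ≤ 2*k) (h2 : k+1 ≤ n) : n.choose (k+1) < n.choose k := by
  have h1 := Nat.choose_succ_right_eq n k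
  have hpos : 0 < n.choose k := Nat.choose_pos (by omega)
  have h3 : n.choose (k+1) * (k+1) < n.choose k * (k+1) := by
    rw [h1]
    exact Nat.mul_lt_mul_of_pos_left (by omega) hpos
  exact Nat.lt_of_mul_lt_mul_right h3

theorem stmt_19 (m : ℕ) (hm : 1 ≤ m) :
    MvPolynomial.coeff
      (Finsupp.single (0 : Fin 2) (12 * m + 8) + Finsupp.single (1 : Fin 2) (12 * m + 8))
      (Wpoly m) = 0 ∧
    ∀ i : ℕ, i % 4 = 0 → 4 * m + 4 ≤ i → i ≤ 20 * m + 12 → i ≠ 12 * m + 8 →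
      MvPolynomial.coeff
        (Finsupp.single (0 : Fin 2) i + Finsupp.single (1 : Fin 2) (24 * m + 16 - i))
        (Wpoly m) ≠ 0 := by
  constructor
  · have h := coeff_W m hm (2*m+1) (by omega)
    rw [show 4*m+4+4*(2*m+1) = 12*m+8 from by ring] at h
    rw [show 24*m+16-(12*m+8) = 12*m+8 from by omega] at h
    rw [show (12 : ℕ) * m + 8 = 12*m+8 from rfl, h]
    rw [if_pos (show 3 ≤ 2*m+1 ∧ 2*m+1-3 < 4*m by omega),
        if_pos (show 2 ≤ 2*m+1 ∧ 2*m+1-2 < 4*m by omega),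
        if_pos (show 1 ≤ 2*m+1 ∧ 2*m+1-1 < 4*m by omega),
        if_pos (show 0 ≤ 2*m+1 ∧ 2*m+1-0 < 4*m by omega)]
    rw [show 2*m+1-3 = 2*m-2 from by omega, show 2*m+1-2 = 2*m-1 from by omega,
        show 2*m+1-1 = 2*m from by omega, show 2*m+1-0 = 2*m+1 from by omega]
    have hC1 : (4*m-1).choose (2*m) = (4*m-1).choose (2*m-1) := by
      have h2 := Nat.choose_symm (n := 4*m-1) (k := 2*m) (by omega)
      rw [show 4*m-1-(2*m) = 2*m-1 from by omega] at h2; exact h2.symm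
    have hC2 : (4*m-1).choose (2*m+1) = (4*m-1).choose (2*m-2) := by
      have h2 := Nat.choose_symm (n := 4*m-1) (k := 2*m+1) (by omega)
      rw [show 4*m-1-(2*m+1) = 2*m-2 from by omega] at h2; exact h2.symm
    have hq1 : ((4*m-1).choose (2*m) : ℚ) = (4*m-1).choose (2*m-1) := by exact_mod_cast hC1
    have hq2 : ((4*m-1).choose (2*m+1) : ℚ) = (4*m-1).choose (2*m-2) := by exact_mod_cast hC2
    simp only [cW]
    have e1 : (-1:ℚ)^(2*m-2+1) = -1 := Odd.neg_one_pow ⟨m-1, by omega⟩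
    have e2 : (-1:ℚ)^(2*m-1+1) = 1 := Even.neg_one_pow ⟨m, by omega⟩
    have e3 : (-1:ℚ)^(2*m+1) = -1 := Odd.neg_one_pow ⟨m, by omega⟩
    have e4 : (-1:ℚ)^(2*m+1+1) = 1 := Even.neg_one_pow ⟨m+1, by omega⟩
    rw [e1, e2, e3, e4, hq1, hq2]
    ring
  · intro i hi4 hil hiu hne
    obtain ⟨j, rfl⟩ : ∃ j, i = 4*m+4+4*j := ⟨(i - (4*m+4))/4, by omega⟩
    have hj : j ≤ 4*m+2 := by omega
    have hjne : j ≠ 2*m+1 := by omega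
    rw [coeff_W m hm j hj]
    rcases j with _ | _ | _ | t
    · -- j = 0
      rw [if_neg (by omega), if_neg (by omega), if_neg (by omega),
          if_pos (show 0 ≤ 0 ∧ 0-0 < 4*m by omega)]
      norm_num [cW]
    · -- j = 1
      rw [if_neg (by omega), if_neg (by omega),
          if_pos (show 1 ≤ 1 ∧ 1-1 < 4*m by omega),
          if_pos (show 0 ≤ 1 ∧ 1-0 < 4*m by omega)]
      norm_num [cW]
      positivity
    · -- j = 2
      rw [if_neg (by omega),
          if_pos (show 2 ≤ 2 ∧ 2-2 < 4*m by omega),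
          if_pos (show 1 ≤ 2 ∧ 2-1 < 4*m by omega),
          if_pos (show 0 ≤ 2 ∧ 2-0 < 4*m by omega)]
      norm_num [cW, Nat.choose_one_right]
      have hc : (0:ℚ) ≤ ((4*m-1).choose 2 : ℚ) := by positivity
      have hm4 : (3:ℚ) ≤ ((4*m-1 : ℕ) : ℚ) := by exact_mod_cast (show 3 ≤ 4*m-1 by omega)
      intro h
      linarith
    · -- j = t + 3
      have hjj : t + 3 ≤ 4*m+2 := hj
      have e3' : (if 3 ≤ t+3 ∧ t+3-3 < 4*m then cW m (t+3-3) else 0) = cW m t := by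
        rw [if_pos (by omega), show t+3-3 = t from by omega]
      have egen : ∀ r : ℕ, 4*m-1 < r → cW m r = 0 := by
        intro r hr; simp [cW, Nat.choose_eq_zero_of_lt hr]
      have e2' : (if 2 ≤ t+3 ∧ t+3-2 < 4*m then cW m (t+3-2) else 0) = cW m (t+1) := by
        rw [show t+3-2 = t+1 from by omega]
        split
        · rfl
        · next h => rw [egen (t+1) (by omega)]
      have e1' : (if 1 ≤ t+3 ∧ t+3-1 < 4*m then cW m (t+3-1) else 0) = cW m (t+2) := by
        rw [show t+3-1 = t+2 from by omega]
        split
        · rfl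
        · next h => rw [egen (t+2) (by omega)]
      have e0' : (if 0 ≤ t+3 ∧ t+3-0 < 4*m then cW m (t+3-0) else 0) = cW m (t+3) := by
        rw [show t+3-0 = t+3 from by omega]
        split
        · rfl
        · next h => rw [egen (t+3) (by omega)]
      rw [e3', e2', e1', e0']
      have key : (((4*m-1).choose t : ℚ) + 33*((4*m-1).choose (t+1))
          - 33*((4*m-1).choose (t+2)) - ((4*m-1).choose (t+3))) ≠ 0 := by
        rcases lt_trichotomy (t+3) (2*m+1) with hlt | heq | hgt
        · -- increasing side : t+3 ≤ 2m, expression negative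
          have h1 : (4*m-1).choose t < (4*m-1).choose (t+1) := choose_lt_succ' (by omega)
          have h2 : (4*m-1).choose (t+1) ≤ (4*m-1).choose (t+2) := choose_le_succ' (by omega)
          have h3 : (4*m-1).choose (t+2) ≤ (4*m-1).choose (t+3) := choose_le_succ' (by omega)
          have q1 : ((4*m-1).choose t : ℚ) < (4*m-1).choose (t+1) := by exact_mod_cast h1
          have q2 : ((4*m-1).choose (t+1) : ℚ) ≤ (4*m-1).choose (t+2) := by exact_mod_cast h2
          have q3 : ((4*m-1).choose (t+2) : ℚ) ≤ (4*m-1).choose (t+3) := by exact_mod_cast h3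
          intro h; linarith
        · exact absurd heq hjne
        · -- decreasing side : t+3 ≥ 2m+2
          rcases lt_trichotomy (t+3) (4*m+1) with hlt2 | heq2 | hgt2
          · -- 2m+2 ≤ t+3 ≤ 4m
            have h2 : (4*m-1).choose (t+2) < (4*m-1).choose (t+1) :=
              choose_succ_lt' (by omega) (by omega)
            have ha : (4*m-1).choose (t+1) ≤ (4*m-1).choose t := choose_succ_le' (by omega)
            have hb : (4*m-1).choose (t+2) ≤ (4*m-1).choose (t+1) := choose_succ_le' (by omega)
            have hc : (4*m-1).choose (t+3) ≤ (4*m-1).choose (t+2) := choose_succ_le' (by omega)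
            have q2 : ((4*m-1).choose (t+2) : ℚ) < (4*m-1).choose (t+1) := by exact_mod_cast h2
            have qa : ((4*m-1).choose (t+1) : ℚ) ≤ (4*m-1).choose t := by exact_mod_cast ha
            have qb : ((4*m-1).choose (t+2) : ℚ) ≤ (4*m-1).choose (t+1) := by exact_mod_cast hb
            have qc : ((4*m-1).choose (t+3) : ℚ) ≤ (4*m-1).choose (t+2) := by exact_mod_cast hc
            intro h; linarith
          · -- t+3 = 4m+1
            obtain rfl : t = 4*m-2 := by omega
            rw [show 4*m-2+1 = 4*m-1 from by omega, Nat.choose_self,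
                Nat.choose_eq_zero_of_lt (show 4*m-1 < 4*m-2+2 by omega),
                Nat.choose_eq_zero_of_lt (show 4*m-1 < 4*m-2+3 by omega)]
            have hc : (0:ℚ) ≤ ((4*m-1).choose (4*m-2) : ℚ) := by positivity
            intro h; norm_num at h; linarith
          · -- t+3 = 4m+2
            obtain rfl : t = 4*m-1 := by omega
            rw [Nat.choose_self,
                Nat.choose_eq_zero_of_lt (show 4*m-1 < 4*m-1+1 by omega),
                Nat.choose_eq_zero_of_lt (show 4*m-1 < 4*m-1+2 by omega),
                Nat.choose_eq_zero_of_lt (show 4*m-1 < 4*m-1+3 by omega)]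
            norm_num
      simp only [cW]
      rcases Nat.even_or_odd t with he | ho
      · have p1 : (-1:ℚ)^(t+1) = -1 := Odd.neg_one_pow (by rcases he with ⟨r,hr⟩; exact ⟨r, by omega⟩)
        have p2 : (-1:ℚ)^(t+1+1) = 1 := Even.neg_one_pow (by rcases he with ⟨r,hr⟩; exact ⟨r+1, by omega⟩)
        have p3 : (-1:ℚ)^(t+2+1) = -1 := Odd.neg_one_pow (by rcases he with ⟨r,hr⟩; exact ⟨r+1, by omega⟩)
        have p4 : (-1:ℚ)^(t+3+1) = 1 := Even.neg_one_pow (by rcases he with ⟨r,hr⟩; exact ⟨r+2, by omega⟩)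
        rw [p1, p2, p3, p4]
        intro h; apply key; linarith
      · have p1 : (-1:ℚ)^(t+1) = 1 := Even.neg_one_pow (by rcases ho with ⟨r,hr⟩; exact ⟨r+1, by omega⟩)
        have p2 : (-1:ℚ)^(t+1+1) = -1 := Odd.neg_one_pow (by rcases ho with ⟨r,hr⟩; exact ⟨r+1, by omega⟩)
        have p3 : (-1:ℚ)^(t+2+1) = 1 := Even.neg_one_pow (by rcases ho with ⟨r,hr⟩; exact ⟨r+2, by omega⟩)
        have p4 : (-1:ℚ)^(t+3+1) = -1 := Odd.neg_one_pow (by rcases ho with ⟨r,hr⟩; exact ⟨r+2, by omega⟩)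
        rw [p1, p2, p3, p4]
        intro h; apply key; linarith
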